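/- Let A be a real d×n matrix, b ∈ ℝ^d, P a real m×n matrix, and let f : ℝ → ℝ be convex, three times differentiable with continuous third derivative, and M-quasi-self-concordant (|f'''(s)| ≤ M·f''(s) for all s) for some M > 0. Let ε > 0, R > 0, and α, τ > 0 with α·τ ≤ 1/M, let w ∈ ℝ^m, let r_i = R^{−2}(f''(w_i) + ε·Φ(w)/m), suppose there exists x* with A x* = b and ‖P x*‖_∞ ≤ R, and let Δ̃ attain the minimum of ∑_i r_i (PΔ)_i² over {Δ : AΔ = b}, with ‖PΔ̃‖_∞ ≤ R·τ. Then Φ(w + (ε·α/R)·|PΔ̃|) ≤ (1 + e^ε·(1+ε)·ε·α·M)·Φ(w), where |PΔ̃| denotes the coordinatewise absolute value. -/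

import Mathlib

open scoped BigOperators

theorem my_gron (g : ℝ → ℝ) (M : ℝ) (hgdiff : Differentiable ℝ g)
    (hqsc : ∀ s, |deriv g s| ≤ M * g s)
    (x δ : ℝ) (hδ : 0 ≤ δ) : g (x + δ) ≤ Real.exp (M * δ) * g x := by
  have hanti : Antitone (fun t => Real.exp (-M * t) * g t) := by
    apply antitone_of_deriv_nonpos
    · exact (Real.differentiable_exp.comp (differentiable_id.const_mul (-M))).mul hgdiff
    · intro t
      have h1 : HasDerivAt (fun t => Real.exp (-M * t)) (Real.exp (-M * t) * (-M)) t := by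
        have := ((hasDerivAt_id t).const_mul (-M)).exp
        simpa using this
      have h2 : HasDerivAt g (deriv g t) t := (hgdiff t).hasDerivAt
      have h3 := h1.mul h2
      rw [show (fun t => Real.exp (-M * t) * g t) = (fun t => Real.exp (-M * t)) * g from rfl, h3.deriv]
      have hd : deriv g t ≤ M * g t := (le_abs_self _).trans (hqsc t)
      have hexp : (0:ℝ) < Real.exp (-M * t) := Real.exp_pos _
      nlinarith
  have h := hanti (show x ≤ x + δ by linarith)
  simp only at h
  have hpos : (0:ℝ) < Real.exp (M * (x + δ)) := Real.exp_pos _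
  have h2 := mul_le_mul_of_nonneg_left h hpos.le
  calc g (x + δ) = Real.exp (M * (x+δ)) * (Real.exp (-M * (x+δ)) * g (x+δ)) := by
        rw [← mul_assoc, ← Real.exp_add]; ring_nf; simp
    _ ≤ Real.exp (M * (x+δ)) * (Real.exp (-M * x) * g x) := h2
    _ = Real.exp (M * δ) * g x := by rw [← mul_assoc, ← Real.exp_add]; ring_nf

theorem my_exp_bound (ε x : ℝ) (hx : 0 ≤ x) (hxε : x ≤ ε) :
    Real.exp x ≤ 1 + Real.exp ε * x := by
  have h1 : (-x) + 1 ≤ Real.exp (-x) := Real.add_one_le_exp _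
  have h2 : Real.exp x * Real.exp (-x) = 1 := by rw [← Real.exp_add]; simp
  have h3 : Real.exp x ≤ Real.exp ε := Real.exp_le_exp.mpr hxε
  nlinarith [Real.exp_pos x]

set_option maxHeartbeats 1000000 in
/-- Lemma 3.2, single flow step (f'' non-decreasing case):
Φ(w + (εα/R)|PΔ̃|) ≤ (1 + e^ε·(1+ε)·ε·α·M)·Φ(w). -/
theorem phi_increase_flow_step
    (d n m : ℕ) (A : Matrix (Fin d) (Fin n) ℝ) (b : Fin d → ℝ)
    (P : Matrix (Fin m) (Fin n) ℝ) (f : ℝ → ℝ) (M : ℝ) (hM : 0 < M)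
    (hconv : ConvexOn ℝ Set.univ f) (hf : ContDiff ℝ 3 f)
    (hqsc : ∀ s : ℝ, |deriv (deriv (deriv f)) s| ≤ M * deriv (deriv f) s)
    (ε R α τ : ℝ) (hε : 0 < ε) (hR : 0 < R) (hα : 0 < α) (hτ : 0 < τ)
    (hατ : α * τ ≤ 1 / M)
    (w : Fin m → ℝ) (r : Fin m → ℝ)
    (hr : ∀ i, r i = 1 / R ^ 2 *
      (deriv (deriv f) (w i) + ε * (∑ j, deriv (deriv f) (w j)) / m))
    (xstar : Fin n → ℝ) (hxA : A.mulVec xstar = b)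
    (hxR : ‖P.mulVec xstar‖ ≤ R)
    (Δt : Fin n → ℝ) (hΔA : A.mulVec Δt = b)
    (hΔmin : ∀ Δ : Fin n → ℝ, A.mulVec Δ = b →
      (∑ i, r i * (P.mulVec Δt) i ^ 2) ≤ ∑ i, r i * (P.mulVec Δ) i ^ 2)
    (hwidth : ‖P.mulVec Δt‖ ≤ R * τ) :
    (∑ i, deriv (deriv f) (w i + ε * α / R * |(P.mulVec Δt) i|)) ≤
      (1 + Real.exp ε * (1 + ε) * ε * α * M) * ∑ i, deriv (deriv f) (w i) := by
  set g := deriv (deriv f) with hgdef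
  set v := P.mulVec Δt with hvdef
  have hg0 : ∀ s, 0 ≤ g s := by
    intro s
    have h := (abs_nonneg (deriv g s)).trans (hqsc s)
    nlinarith
  have hgdiff : Differentiable ℝ g := by
    have h1 : ContDiff ℝ (2+1 : ℕ) f := by norm_num; exact hf
    have h2 : ContDiff ℝ 2 (deriv f) := (contDiff_succ_iff_deriv.mp h1).2.2
    have h3 : ContDiff ℝ (1+1 : ℕ) (deriv f) := by norm_num; exact h2
    have h4 : ContDiff ℝ 1 g := (contDiff_succ_iff_deriv.mp h3).2.2
    exact h4.differentiable one_ne_zero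
  set Φ := ∑ j, g (w j) with hΦdef
  have hΦ0 : 0 ≤ Φ := Finset.sum_nonneg fun j _ => hg0 _
  set δ : Fin m → ℝ := fun i => ε * α / R * |v i| with hδdef
  have hδ0 : ∀ i, 0 ≤ δ i := by
    intro i; apply mul_nonneg (by positivity) (abs_nonneg _)
  have hvle : ∀ i, |v i| ≤ R * τ := by
    intro i
    calc |v i| = ‖v i‖ := rfl
      _ ≤ ‖v‖ := norm_le_pi_norm v i
      _ ≤ R * τ := hwidth
  have hMδ : ∀ i, M * δ i ≤ ε := by
    intro i
    have h1 : δ i ≤ ε * α / R * (R * τ) := by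
      apply mul_le_mul_of_nonneg_left (hvle i) (by positivity)
    have h2 : M * δ i ≤ M * (ε * α / R * (R * τ)) :=
      mul_le_mul_of_nonneg_left h1 hM.le
    have h3 : M * (ε * α / R * (R * τ)) = ε * (M * (α * τ)) := by field_simp
    have h4 : M * (α * τ) ≤ 1 := by
      have := (le_div_iff₀ hM).mp hατ
      linarith
    nlinarith
  -- per-coordinate bound
  have hkey : ∀ i, g (w i + δ i) ≤ g (w i) + Real.exp ε * (M * δ i) * g (w i) := by
    intro i
    have h1 := my_gron g M hgdiff hqsc (w i) (δ i) (hδ0 i)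
    have h2 := my_exp_bound ε (M * δ i) (mul_nonneg hM.le (hδ0 i)) (hMδ i)
    have h3 := mul_le_mul_of_nonneg_right h2 (hg0 (w i))
    calc g (w i + δ i) ≤ Real.exp (M * δ i) * g (w i) := h1
      _ ≤ (1 + Real.exp ε * (M * δ i)) * g (w i) := h3
      _ = g (w i) + Real.exp ε * (M * δ i) * g (w i) := by ring
  -- define S and bound it
  set S := ∑ i, |v i| * g (w i) with hSdef
  have hS0 : 0 ≤ S := Finset.sum_nonneg fun i _ => mul_nonneg (abs_nonneg _) (hg0 _)
  have hSbound : S ≤ R * (1 + ε) * Φ := by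
    rcases eq_or_lt_of_le hΦ0 with hΦz | hΦpos
    · -- Φ = 0 : all g (w i) = 0
      have hz : ∀ i ∈ Finset.univ, g (w i) = 0 := by
        intro i _
        have := (Finset.sum_eq_zero_iff_of_nonneg (fun j _ => hg0 (w j))).mp hΦz.symm
        exact this i (Finset.mem_univ i)
      have : S = 0 := Finset.sum_eq_zero fun i _ => by rw [hz i (Finset.mem_univ i), mul_zero]
      rw [this, ← hΦz]; positivity
    · -- Φ > 0, hence m ≠ 0
      have hm : (0:ℝ) < m := by
        rcases Nat.eq_zero_or_pos m with h | h
        · exfalso; subst h; simp [hΦdef] at hΦpos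
        · exact_mod_cast h
      have hm0 : (m:ℝ) ≠ 0 := ne_of_gt hm
      set ρ : Fin m → ℝ := fun i => g (w i) + ε * Φ / m with hρdef
      have hrρ : ∀ i, r i * R ^ 2 = ρ i := by
        intro i
        simp only [hρdef]
        rw [hr i, one_div, mul_comm ((R^2)⁻¹) _, mul_assoc,
          inv_mul_cancel₀ (by positivity : (R:ℝ)^2 ≠ 0), mul_one]
      have hρpos : ∀ i, 0 < ρ i := by
        intro i
        have : 0 < ε * Φ / m := by positivity
        have := hg0 (w i); simp only [hρdef]; linarith
      -- Cauchy-Schwarz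
      have hCS := Finset.sum_mul_sq_le_sq_mul_sq Finset.univ
        (fun i => |v i| * Real.sqrt (ρ i)) (fun i => g (w i) / Real.sqrt (ρ i))
      have hab : ∀ i, (|v i| * Real.sqrt (ρ i)) * (g (w i) / Real.sqrt (ρ i))
          = |v i| * g (w i) := by
        intro i
        have hs : Real.sqrt (ρ i) ≠ 0 := Real.sqrt_ne_zero'.mpr (hρpos i)
        field_simp
      have ha2 : ∀ i, (|v i| * Real.sqrt (ρ i)) ^ 2 = v i ^ 2 * ρ i := by
        intro i
        rw [mul_pow, Real.sq_sqrt (hρpos i).le, sq_abs]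
      have hb2 : ∀ i, (g (w i) / Real.sqrt (ρ i)) ^ 2 = g (w i) ^ 2 / ρ i := by
        intro i
        rw [div_pow, Real.sq_sqrt (hρpos i).le]
      rw [Finset.sum_congr rfl (fun i _ => hab i),
          Finset.sum_congr rfl (fun i _ => ha2 i),
          Finset.sum_congr rfl (fun i _ => hb2 i)] at hCS
      -- bound ∑ g²/ρ ≤ Φ
      have hB : (∑ i, g (w i) ^ 2 / ρ i) ≤ Φ := by
        apply Finset.sum_le_sum
        intro i _
        rw [div_le_iff₀ (hρpos i)]
        have h1 : g (w i) ≤ ρ i := by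
          simp only [hρdef]; have : 0 ≤ ε * Φ / m := by positivity
          linarith
        nlinarith [hg0 (w i)]
      -- bound ∑ v² ρ ≤ R² (1+ε) Φ
      have hA : (∑ i, v i ^ 2 * ρ i) ≤ R ^ 2 * ((1 + ε) * Φ) := by
        have e1 : ∀ i, v i ^ 2 * ρ i = R ^ 2 * (r i * v i ^ 2) := by
          intro i
          rw [← hrρ i]; ring
        have e2 : (∑ i, v i ^ 2 * ρ i) = R ^ 2 * ∑ i, r i * v i ^ 2 := by
          rw [Finset.mul_sum]; exact Finset.sum_congr rfl fun i _ => e1 i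
        rw [e2]
        have hmin := hΔmin xstar hxA
        have hstep : (∑ i, r i * (P.mulVec xstar) i ^ 2) ≤ (1 + ε) * Φ := by
          have hterm : ∀ i, r i * (P.mulVec xstar) i ^ 2 ≤ r i * R ^ 2 := by
            intro i
            have hri : 0 ≤ r i := by
              rw [hr i]
              have : 0 ≤ ε * Φ / m := by positivity
              have := hg0 (w i)
              positivity
            apply mul_le_mul_of_nonneg_left _ hri
            have h1 : |(P.mulVec xstar) i| ≤ R := by
              calc |(P.mulVec xstar) i| = ‖(P.mulVec xstar) i‖ := rfl
                _ ≤ ‖P.mulVec xstar‖ := norm_le_pi_norm _ i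
                _ ≤ R := hxR
            nlinarith [abs_nonneg ((P.mulVec xstar) i), sq_abs ((P.mulVec xstar) i)]
          have hsum2 : (∑ i, r i * R ^ 2) = (1 + ε) * Φ := by
            have e3 : ∀ i, r i * R ^ 2 = ρ i := hrρ
            rw [Finset.sum_congr rfl fun i _ => e3 i]
            simp only [hρdef]
            rw [Finset.sum_add_distrib, Finset.sum_const, Finset.card_univ,
              Fintype.card_fin, nsmul_eq_mul, ← hΦdef]
            rw [mul_div_assoc', mul_comm (m:ℝ), mul_div_assoc, div_self hm0]
            ring
          calc (∑ i, r i * (P.mulVec xstar) i ^ 2) ≤ ∑ i, r i * R ^ 2 :=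
                Finset.sum_le_sum fun i _ => hterm i
            _ = (1 + ε) * Φ := hsum2
        have := le_trans hmin hstep
        nlinarith [sq_nonneg R]
      -- combine
      have hsq : S ^ 2 ≤ (R * (1 + ε) * Φ) ^ 2 := by
        calc S ^ 2 ≤ (∑ i, v i ^ 2 * ρ i) * ∑ i, g (w i) ^ 2 / ρ i := hCS
          _ ≤ (R ^ 2 * ((1 + ε) * Φ)) * Φ := by
              apply mul_le_mul hA hB
                (Finset.sum_nonneg fun i _ => div_nonneg (sq_nonneg _) (hρpos i).le)
                (by positivity)
          _ ≤ (R * (1 + ε) * Φ) ^ 2 := by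
              have hx : (0:ℝ) ≤ R ^ 2 * (1 + ε) * ε * Φ ^ 2 := by positivity
              nlinarith [hx]
      have hT0 : 0 ≤ R * (1 + ε) * Φ := by positivity
      nlinarith [hsq, hS0, hT0, sq_nonneg (S - R * (1 + ε) * Φ)]
  -- final combination
  have hsum : (∑ i, g (w i + δ i)) ≤ Φ + Real.exp ε * M * (ε * α / R) * S := by
    calc (∑ i, g (w i + δ i)) ≤ ∑ i, (g (w i) + Real.exp ε * (M * δ i) * g (w i)) :=
          Finset.sum_le_sum fun i _ => hkey i
      _ = Φ + Real.exp ε * M * (ε * α / R) * S := by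
          rw [Finset.sum_add_distrib, hSdef, Finset.mul_sum]
          congr 1
          apply Finset.sum_congr rfl
          intro i _
          simp only [hδdef]
          ring
  have hexp0 : 0 < Real.exp ε := Real.exp_pos _
  have hfinal : Real.exp ε * M * (ε * α / R) * S ≤ Real.exp ε * (1 + ε) * ε * α * M * Φ := by
    have h1 : Real.exp ε * M * (ε * α / R) * S ≤ Real.exp ε * M * (ε * α / R) * (R * (1 + ε) * Φ) := by
      apply mul_le_mul_of_nonneg_left hSbound (by positivity)
    calc Real.exp ε * M * (ε * α / R) * S
        ≤ Real.exp ε * M * (ε * α / R) * (R * (1 + ε) * Φ) := h1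
      _ = Real.exp ε * (1 + ε) * ε * α * M * Φ := by field_simp
  calc (∑ i, g (w i + ε * α / R * |v i|)) = ∑ i, g (w i + δ i) := rfl
    _ ≤ Φ + Real.exp ε * M * (ε * α / R) * S := hsum
    _ ≤ Φ + Real.exp ε * (1 + ε) * ε * α * M * Φ := by linarith
    _ = (1 + Real.exp ε * (1 + ε) * ε * α * M) * Φ := by ring
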